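/- Let A ⊆ B be unital C*-algebras such that the inclusion is rigid (every ucp endomorphism of B fixing A pointwise is the identity) and B is injective as an operator system. If Θ : B → C and Σ : C → B are ucp maps into/from another unital C*-algebra C containing a copy of A, with Θ|_A = id_A, Σ|_A = id_A, and the inclusion A ⊆ C also rigid, then Σ ∘ Θ = id_B and Θ ∘ Σ = id_C; hence Θ is a complete order isomorphism, and therefore a *-isomorphism B ≅ C. -/

import Mathlib

/-- Positivity in a matrix algebra over a ⋆-ring: `m ≥ 0` iff `m = zᴴ * z` for some `z`. -/
def MatPos {A : Type*} [NonUnitalRing A] [StarRing A] {n : ℕ}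
    (m : Matrix (Fin n) (Fin n) A) : Prop :=
  ∃ z : Matrix (Fin n) (Fin n) A, m = z.conjTranspose * z

/-- A linear map between ⋆-algebras is completely positive if it maps positive matrices to
positive matrices at every matrix level. -/
def IsCP {A B : Type*} [NonUnitalRing A] [StarRing A] [Module ℂ A]
    [NonUnitalRing B] [StarRing B] [Module ℂ B] (φ : A →ₗ[ℂ] B) : Prop :=
  ∀ (n : ℕ) (m : Matrix (Fin n) (Fin n) A), MatPos m → MatPos (m.map φ)

/-- The C*-norm of a matrix over a unital C*-algebra, characterised order-theoretically:
`‖m‖ = inf {t ≥ 0 | t² • 1 - mᴴ * m ≥ 0}`. -/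
noncomputable def matNorm {A : Type*} [Ring A] [StarRing A] [Module ℝ A] {n : ℕ}
    (m : Matrix (Fin n) (Fin n) A) : ℝ :=
  sInf {t : ℝ | 0 ≤ t ∧
    MatPos (t ^ 2 • (1 : Matrix (Fin n) (Fin n) A) - m.conjTranspose * m)}

/-- An operator system: a unital, star-closed subspace of a unital C*-algebra. -/
def IsOpSystem {W : Type*} [CStarAlgebra W] (S : Submodule ℂ W) : Prop :=
  (1 : W) ∈ S ∧ ∀ x ∈ S, star x ∈ S

/-- Completely positive maps are ⋆-preserving. -/
lemma cp_star {B C : Type*} [Ring B] [StarRing B] [Module ℂ B]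
    [Ring C] [StarRing C] [Module ℂ C] (φ : B →ₗ[ℂ] C) (hcp : IsCP φ) (x : B) :
    φ (star x) = star (φ x) := by
  have hM : MatPos (!![(1:B), x; star x, star x * x]) := by
    refine ⟨!![1, x; 0, 0], ?_⟩
    ext i j
    fin_cases i <;> fin_cases j <;>
      simp [Matrix.mul_apply, Fin.sum_univ_two, Matrix.conjTranspose_apply]
  obtain ⟨w, hw⟩ := hcp 2 _ hM
  have h10 : φ (star x) = (w.conjTranspose * w) 1 0 := by
    rw [← hw]; simp [Matrix.map_apply]
  have h01 : φ x = (w.conjTranspose * w) 0 1 := by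
    rw [← hw]; simp [Matrix.map_apply]
  have hsa : (w.conjTranspose * w).conjTranspose = w.conjTranspose * w := by
    rw [Matrix.conjTranspose_mul, Matrix.conjTranspose_conjTranspose]
  calc φ (star x) = (w.conjTranspose * w) 1 0 := h10
    _ = ((w.conjTranspose * w).conjTranspose) 1 0 := by rw [hsa]
    _ = star ((w.conjTranspose * w) 0 1) := by rw [Matrix.conjTranspose_apply]
    _ = star (φ x) := by rw [h01]

/-- The Kadison–Schwarz inequality for unital completely positive maps. -/
lemma cp_schwarz {B C : Type*} [Ring B] [StarRing B] [Module ℂ B]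
    [CStarAlgebra C] [PartialOrder C] [StarOrderedRing C]
    (φ : B →ₗ[ℂ] C) (hφ1 : φ 1 = 1) (hcp : IsCP φ) (x : B) :
    star (φ x) * φ x ≤ φ (star x * x) := by
  have hM : MatPos (!![(1:B), x; star x, star x * x]) := by
    refine ⟨!![1, x; 0, 0], ?_⟩
    ext i j
    fin_cases i <;> fin_cases j <;>
      simp [Matrix.mul_apply, Fin.sum_univ_two, Matrix.conjTranspose_apply]
  obtain ⟨w, hw⟩ := hcp 2 _ hM
  set a := φ x with ha
  have hstar : φ (star x) = star a := by
    have hsa : (w.conjTranspose * w).conjTranspose = w.conjTranspose * w := by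
      rw [Matrix.conjTranspose_mul, Matrix.conjTranspose_conjTranspose]
    have h10 : φ (star x) = (w.conjTranspose * w) 1 0 := by
      rw [← hw]; simp [Matrix.map_apply]
    have h01 : a = (w.conjTranspose * w) 0 1 := by
      rw [ha, ← hw]; simp [Matrix.map_apply]
    rw [h10, ← hsa, Matrix.conjTranspose_apply, ← h01]
  set V : Matrix (Fin 2) (Fin 2) C := !![-a, 0; 1, 0] with hV
  set u := w * V with hu
  have key : (u.conjTranspose * u) 0 0 = φ (star x * x) - star a * a := by
    have : u.conjTranspose * u = V.conjTranspose * ((w.conjTranspose * w) * V) := by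
      rw [hu, Matrix.conjTranspose_mul]
      noncomm_ring
    rw [this, ← hw]
    simp [Matrix.mul_apply, Fin.sum_univ_two, Matrix.conjTranspose_apply, hV,
      Matrix.map_apply, hφ1, hstar]
    noncomm_ring
  have pos : (0:C) ≤ (u.conjTranspose * u) 0 0 := by
    have : (u.conjTranspose * u) 0 0 = star (u 0 0) * u 0 0 + star (u 1 0) * u 1 0 := by
      simp [Matrix.mul_apply, Fin.sum_univ_two, Matrix.conjTranspose_apply]
    rw [this]
    exact add_nonneg (star_mul_self_nonneg _) (star_mul_self_nonneg _)
  rw [key] at pos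
  exact sub_nonneg.mp pos

/-- Completely positive maps are positive. -/
lemma cp_nonneg {B C : Type*} [CStarAlgebra B] [PartialOrder B] [StarOrderedRing B]
    [Ring C] [StarRing C] [Module ℂ C] [PartialOrder C] [StarOrderedRing C]
    (φ : B →ₗ[ℂ] C) (hcp : IsCP φ) {p : B} (hp : 0 ≤ p) : 0 ≤ φ p := by
  obtain ⟨z, hz⟩ : ∃ z : B, p = star z * z := by
    refine ⟨CFC.sqrt p, ?_⟩
    have hsa : IsSelfAdjoint (CFC.sqrt p) := IsSelfAdjoint.of_nonneg (CFC.sqrt_nonneg p)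
    rw [hsa.star_eq, CFC.sqrt_mul_sqrt_self p hp]
  have hM : MatPos (!![p]) := by
    refine ⟨!![z], ?_⟩
    ext i j
    fin_cases i; fin_cases j
    simp [Matrix.mul_apply, Matrix.conjTranspose_apply, hz]
  obtain ⟨w, hw⟩ := hcp 1 _ hM
  have : φ p = star (w 0 0) * w 0 0 := by
    have h00 : φ p = (w.conjTranspose * w) 0 0 := by
      rw [← hw]; simp [Matrix.map_apply]
    rw [h00]
    simp [Matrix.mul_apply, Matrix.conjTranspose_apply]
  rw [this]
  exact star_mul_self_nonneg _

/-- Composition of completely positive maps is completely positive. -/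
lemma cp_comp {B C D : Type*} [NonUnitalRing B] [StarRing B] [Module ℂ B]
    [NonUnitalRing C] [StarRing C] [Module ℂ C]
    [NonUnitalRing D] [StarRing D] [Module ℂ D]
    (φ : B →ₗ[ℂ] C) (ψ : C →ₗ[ℂ] D) (hφ : IsCP φ) (hψ : IsCP ψ) :
    IsCP (ψ ∘ₗ φ) := by
  intro n m hm
  have := hψ n (m.map φ) (hφ n m hm)
  rwa [Matrix.map_map] at this

theorem ucp_inverse_pair_is_star_iso
    {B C : Type*} [CStarAlgebra B] [CStarAlgebra C]
    (A : StarSubalgebra ℂ B) (j : A →⋆ₐ[ℂ] C) (hjinj : Function.Injective j)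
    -- rigidity of A ⊆ B
    (hrigidB : ∀ Φ : B →ₗ[ℂ] B, Φ 1 = 1 → IsCP Φ → (∀ a ∈ A, Φ a = a) → ∀ x, Φ x = x)
    -- B is injective as an operator system
    (hinj : ∀ (W : Type) [CStarAlgebra W] (S T : Submodule ℂ W),
      IsOpSystem S → IsOpSystem T → ∀ (hST : S ≤ T),
      ∀ u : S →ₗ[ℂ] B, (∀ x : S, (x : W) = 1 → u x = 1) →
        (∀ (n : ℕ) (m : Matrix (Fin n) (Fin n) S),
          MatPos (m.map (fun s => (s : W))) → MatPos (m.map (fun s => u s))) →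
        ∃ v : T →ₗ[ℂ] B, (∀ x : T, (x : W) = 1 → v x = 1) ∧
          (∀ (n : ℕ) (m : Matrix (Fin n) (Fin n) T),
            MatPos (m.map (fun s => (s : W))) → MatPos (m.map (fun s => v s))) ∧
          (∀ (s : W) (hs : s ∈ S), v ⟨s, hST hs⟩ = u ⟨s, hs⟩))
    -- rigidity of A ⊆ C (via the copy j(A))
    (hrigidC : ∀ Ψ : C →ₗ[ℂ] C, Ψ 1 = 1 → IsCP Ψ →
      (∀ a : A, Ψ (j a) = j a) → ∀ y, Ψ y = y)
    (Θ : B →ₗ[ℂ] C) (hΘ1 : Θ 1 = 1) (hΘcp : IsCP Θ)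
    (hΘA : ∀ a : A, Θ a = j a)
    (Sig : C →ₗ[ℂ] B) (hSig1 : Sig 1 = 1) (hSigcp : IsCP Sig)
    (hSigA : ∀ a : A, Sig (j a) = a) :
    (∀ x, Sig (Θ x) = x) ∧ (∀ y, Θ (Sig y) = y) ∧
    (∀ x y : B, Θ (x * y) = Θ x * Θ y) ∧ (∀ x : B, Θ (star x) = star (Θ x)) := by
  letI := CStarAlgebra.spectralOrder B
  haveI := CStarAlgebra.spectralOrderedRing B
  letI := CStarAlgebra.spectralOrder C
  haveI := CStarAlgebra.spectralOrderedRing C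
  -- Σ ∘ Θ = id_B by rigidity of A ⊆ B
  have hST : ∀ x : B, Sig (Θ x) = x := by
    intro x
    have := hrigidB (Sig ∘ₗ Θ) (by simp [LinearMap.comp_apply, hΘ1, hSig1])
      (cp_comp Θ Sig hΘcp hSigcp) ?_ x
    · simpa using this
    · intro a ha
      have h1 := hΘA ⟨a, ha⟩
      have h2 := hSigA ⟨a, ha⟩
      simp only [LinearMap.comp_apply]
      rw [show Θ a = j ⟨a, ha⟩ from h1, h2]
  -- Θ ∘ Σ = id_C by rigidity of A ⊆ C
  have hTS : ∀ y : C, Θ (Sig y) = y := by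
    intro y
    have := hrigidC (Θ ∘ₗ Sig) (by simp [LinearMap.comp_apply, hSig1, hΘ1])
      (cp_comp Sig Θ hSigcp hΘcp) ?_ y
    · simpa using this
    · intro a
      simp only [LinearMap.comp_apply]
      rw [hSigA a, hΘA a]
  have hSigInj : Function.Injective Sig := fun u v h => by
    rw [← hTS u, ← hTS v, h]
  -- Θ is star-preserving
  have hstar : ∀ x : B, Θ (star x) = star (Θ x) := cp_star Θ hΘcp
  -- Θ satisfies Θ(x*x) = Θ(x)*Θ(x)
  have hsq : ∀ x : B, Θ (star x * x) = star (Θ x) * Θ x := by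
    intro x
    have le1 := cp_schwarz Θ hΘ1 hΘcp x
    have le2 : Sig (star (Θ x) * Θ x) ≤ star x * x := by
      have h0 : (0:C) ≤ Θ (star x * x) - star (Θ x) * Θ x := sub_nonneg.mpr le1
      have h1 := cp_nonneg Sig hSigcp h0
      rw [map_sub] at h1
      have h2 := sub_nonneg.mp h1
      rwa [hST (star x * x)] at h2
    have le3 : star x * x ≤ Sig (star (Θ x) * Θ x) := by
      have h := cp_schwarz Sig hSig1 hSigcp (Θ x)
      rwa [hST x] at h
    have heq : Sig (star (Θ x) * Θ x) = star x * x := le_antisymm le2 le3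
    apply hSigInj
    rw [hST, heq]
  -- polarization, step 1
  have S1 : ∀ x y : B, Θ (star x * y) + Θ (star y * x)
      = star (Θ x) * Θ y + star (Θ y) * Θ x := by
    intro x y
    have h := hsq (x + y)
    have hxy : star (x + y) * (x + y)
        = star x * x + (star x * y + (star y * x + star y * y)) := by
      simp only [star_add]; noncomm_ring
    rw [hxy] at h
    simp only [map_add] at h
    rw [hsq x, hsq y, star_add] at h
    have hr : (star (Θ x) + star (Θ y)) * (Θ x + Θ y)
        = star (Θ x) * Θ x + (star (Θ x) * Θ y + (star (Θ y) * Θ x + star (Θ y) * Θ y)) := by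
      noncomm_ring
    rw [hr] at h
    have h2 := add_left_cancel h
    rw [← add_assoc, ← add_assoc] at h2
    exact add_right_cancel h2
  -- polarization, step 2
  have S2 : ∀ x y : B, Θ (star x * y) - Θ (star y * x)
      = star (Θ x) * Θ y - star (Θ y) * Θ x := by
    intro x y
    have h := S1 (Complex.I • x) y
    simp only [star_smul, smul_mul_assoc, mul_smul_comm, map_smul, Complex.star_def,
      Complex.conj_I] at h
    -- h : -I • Θ(x* y) + I • Θ(y* x) = -I • (Θx* Θy) + I • (Θy* Θx)  (roughly)
    have h2 := congrArg (fun t => Complex.I • t) h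
    simp only [smul_add, smul_smul, neg_smul, smul_neg, Complex.I_mul_I, neg_neg,
      one_smul, neg_one_smul] at h2
    -- h2 should now read Θ(x* y) - Θ(y* x) = Θx* Θy - Θy* Θx (as + neg)
    rw [sub_eq_add_neg, sub_eq_add_neg]
    convert h2 using 2 <;> simp
  -- combine
  have hmul' : ∀ x y : B, Θ (star x * y) = star (Θ x) * Θ y := by
    intro x y
    have h2 : (2:ℂ) • Θ (star x * y) = (2:ℂ) • (star (Θ x) * Θ y) := by
      have c1 : Θ (star x * y) + Θ (star y * x) + (Θ (star x * y) - Θ (star y * x))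
          = (2:ℂ) • Θ (star x * y) := by
        rw [two_smul]; abel
      have c2 : star (Θ x) * Θ y + star (Θ y) * Θ x
          + (star (Θ x) * Θ y - star (Θ y) * Θ x) = (2:ℂ) • (star (Θ x) * Θ y) := by
        rw [two_smul]; abel
      rw [← c1, ← c2, S1 x y, S2 x y]
    exact smul_right_injective C (two_ne_zero) h2
  have hmul : ∀ x y : B, Θ (x * y) = Θ x * Θ y := by
    intro x y
    have h := hmul' (star x) y
    rwa [star_star, hstar, star_star] at h
  exact ⟨hST, hTS, hmul, hstar⟩
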